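/- Given points x^α, x^β in Σ_2 constructed from α, β ∈ {0,1}^ℕ as the concatenations x^γ = M^{γ_1}_{a_1} M^0_{a_2} M^{γ_2}_{a_3} M^0_{a_4} M^{γ_3}_{a_5} ... (where M^0_i = M_i, M^1_i = \overline{M_i}, and {a_n} is increasing with lim a_n/a_{n+1} = 0), if {j : α(j) ≠ β(j)} is infinite, then the upper distributional function satisfies Φ*_{x^α,x^β}(ε) = 1 for every ε > 0. -/

import Mathlib

open Filter

/-- Metric on Σ₂ = {0,1}^ℕ : d(u,v) = Σ_{i≥1} δ(u_i,v_i)/2^i (coordinates 0-indexed). -/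
noncomputable def dist2 (u v : ℕ → Bool) : ℝ :=
  ∑' i : ℕ, if u i = v i then 0 else (1/2)^(i+1)

/-- The shift map. -/
def shift (u : ℕ → Bool) : ℕ → Bool := fun n => u (n + 1)

/-- Binary complement of a word. -/
def wordCompl (B : List Bool) : List Bool := B.map (fun b => !b)

/-- Morse blocks: M_0 = 0, M_{i+1} = M_i followed by its complement. -/
def morseBlock : ℕ → List Bool
  | 0 => [false]
  | i + 1 => morseBlock i ++ wordCompl (morseBlock i)

/-- The Morse sequence, the limit of the Morse blocks. -/
def morse : ℕ → Bool := fun n => (morseBlock (n + 1)).getD n false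

open Classical in
/-- Infinite concatenation of a sequence of (nonempty) blocks. -/
noncomputable def concatSeq (B : ℕ → List Bool) (k : ℕ) : Bool :=
  if h : ∃ n, ∑ i ∈ Finset.range n, (B i).length ≤ k ∧
      k < ∑ i ∈ Finset.range (n + 1), (B i).length then
    (B h.choose).getD (k - ∑ i ∈ Finset.range h.choose, (B i).length) false
  else false

open Classical in
/-- Lower distributional function. -/
noncomputable def Phi (x y : ℕ → Bool) (δ : ℝ) : ℝ :=
  liminf (fun m : ℕ =>
    (((Finset.Ioo 0 m).filter (fun k => dist2 (shift^[k] x) (shift^[k] y) < δ)).card : ℝ) / m)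
    atTop

open Classical in
/-- Upper distributional function. -/
noncomputable def PhiStar (x y : ℕ → Bool) (ε : ℝ) : ℝ :=
  limsup (fun m : ℕ =>
    (((Finset.Ioo 0 m).filter (fun k => dist2 (shift^[k] x) (shift^[k] y) < ε)).card : ℝ) / m)
    atTop

/-- A Li-Yorke scrambled triple. -/
noncomputable def ScrTriple (x y z : ℕ → Bool) : Prop :=
  x ≠ y ∧ x ≠ z ∧ y ≠ z ∧
  liminf (fun k : ℕ => max (max (dist2 (shift^[k] x) (shift^[k] y))
      (dist2 (shift^[k] x) (shift^[k] z))) (dist2 (shift^[k] y) (shift^[k] z))) atTop = 0 ∧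
  0 < limsup (fun k : ℕ => min (min (dist2 (shift^[k] x) (shift^[k] y))
      (dist2 (shift^[k] x) (shift^[k] z))) (dist2 (shift^[k] y) (shift^[k] z))) atTop

/-- Concatenation of Morse blocks M_{a j}, complemented where `e j = true`. -/
noncomputable def blockPt (a : ℕ → ℕ) (e : ℕ → Bool) : ℕ → Bool :=
  concatSeq (fun j => if e j then wordCompl (morseBlock (a j)) else morseBlock (a j))

/-- A point occurring as in Theorem 2: odd-position blocks fixed, even-position blocks chosen by α. -/
noncomputable def xpt (a : ℕ → ℕ) (α : ℕ → Bool) : ℕ → Bool :=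
  blockPt a (fun j => if j % 2 = 0 then α (j / 2) else false)

/-- Cantor set predicate. -/
def IsCantorSet (C : Set (ℕ → Bool)) : Prop :=
  C.Nonempty ∧ IsCompact C ∧ Perfect C ∧ IsTotallyDisconnected C

/-- The Morse minimal set: orbit closure of the Morse sequence. -/
def morseMinimal : Set (ℕ → Bool) := closure {y | ∃ k : ℕ, y = shift^[k] morse}


-- Auxiliary lemmas


lemma wordCompl_length (B : List Bool) : (wordCompl B).length = B.length := by
  simp [wordCompl]

lemma morseBlock_length (i : ℕ) : (morseBlock i).length = 2 ^ i := by
  induction i with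
  | zero => rfl
  | succ n ih => simp [morseBlock, wordCompl_length, ih]; ring

lemma shift_iter (u : ℕ → Bool) (k n : ℕ) : shift^[k] u n = u (n + k) := by
  induction k generalizing u n with
  | zero => rfl
  | succ m ih =>
    rw [Function.iterate_succ_apply, ih (shift u) n]
    simp [shift, Nat.add_assoc]

lemma sumlen_mono (B : ℕ → List Bool) :
    Monotone (fun n => ∑ i ∈ Finset.range n, (B i).length) :=
  fun _ _ h => Finset.sum_le_sum_of_subset (Finset.range_subset_range.2 h)

lemma concatSeq_eval (B : ℕ → List Bool) (n k : ℕ)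
    (h1 : ∑ i ∈ Finset.range n, (B i).length ≤ k)
    (h2 : k < ∑ i ∈ Finset.range (n + 1), (B i).length) :
    concatSeq B k = (B n).getD (k - ∑ i ∈ Finset.range n, (B i).length) false := by
  have hex : ∃ m, ∑ i ∈ Finset.range m, (B i).length ≤ k ∧
      k < ∑ i ∈ Finset.range (m + 1), (B i).length := ⟨n, h1, h2⟩
  rw [concatSeq, dif_pos hex]
  obtain ⟨hc1, hc2⟩ := hex.choose_spec
  have hcn : hex.choose = n := by
    rcases lt_trichotomy hex.choose n with h | h | h
    · have := sumlen_mono B (Nat.succ_le_of_lt h)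
      simp only [Nat.succ_eq_add_one] at this
      omega
    · exact h
    · have := sumlen_mono B (Nat.succ_le_of_lt h)
      simp only [Nat.succ_eq_add_one] at this
      omega
  rw [hcn]

/-- partial sums of block lengths -/
def Lsum (a : ℕ → ℕ) (n : ℕ) : ℕ := ∑ i ∈ Finset.range n, 2 ^ (a i)

lemma blockLen (a : ℕ → ℕ) (e : ℕ → Bool) (j : ℕ) :
    ((fun j => if e j then wordCompl (morseBlock (a j)) else morseBlock (a j)) j).length
      = 2 ^ (a j) := by
  by_cases h : e j <;> simp [h, wordCompl_length, morseBlock_length]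

lemma blockPt_sumlen (a : ℕ → ℕ) (e : ℕ → Bool) (n : ℕ) :
    ∑ i ∈ Finset.range n,
      ((fun j => if e j then wordCompl (morseBlock (a j)) else morseBlock (a j)) i).length
      = Lsum a n :=
  Finset.sum_congr rfl (fun i _ => blockLen a e i)

lemma xpt_eq_on (a : ℕ → ℕ) (α β : ℕ → Bool) (n k : ℕ) (hn : n % 2 = 1)
    (h1 : Lsum a n ≤ k) (h2 : k < Lsum a n + 2 ^ (a n)) :
    xpt a α k = xpt a β k := by
  have hodd : ∀ γ : ℕ → Bool,
      xpt a γ k = (morseBlock (a n)).getD (k - Lsum a n) false := by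
    intro γ
    set e : ℕ → Bool := fun j => if j % 2 = 0 then γ (j / 2) else false with he
    have h1' : ∑ i ∈ Finset.range n,
        ((fun j => if e j then wordCompl (morseBlock (a j)) else morseBlock (a j)) i).length ≤ k := by
      rw [blockPt_sumlen]; exact h1
    have h2' : k < ∑ i ∈ Finset.range (n + 1),
        ((fun j => if e j then wordCompl (morseBlock (a j)) else morseBlock (a j)) i).length := by
      rw [blockPt_sumlen, Lsum, Finset.sum_range_succ, ← Lsum]; exact h2
    have := concatSeq_eval _ n k h1' h2'
    rw [xpt, blockPt]
    rw [show (fun j => if (if j % 2 = 0 then γ (j / 2) else false) = true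
        then wordCompl (morseBlock (a j)) else morseBlock (a j)) = (fun j =>
        if e j then wordCompl (morseBlock (a j)) else morseBlock (a j)) from rfl]
    rw [this, blockPt_sumlen]
    have hen : e n = false := by simp [he, hn]
    simp [hen]
  rw [hodd α, hodd β]

lemma summable_half_pow : Summable (fun i : ℕ => ((1:ℝ)/2)^(i+1)) :=
  ((summable_geometric_of_lt_one (by norm_num : (0:ℝ) ≤ 1/2) (by norm_num)).mul_right
    (1/2)).congr (fun i => (pow_succ ((1:ℝ)/2) i).symm)

lemma summable_dist2 (u v : ℕ → Bool) :
    Summable (fun i => if u i = v i then (0:ℝ) else (1/2)^(i+1)) := by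
  apply Summable.of_nonneg_of_le (fun i => ?_) (fun i => ?_) summable_half_pow
  · by_cases h : u i = v i <;> simp [h] <;> positivity
  · by_cases h : u i = v i <;> simp [h] <;> positivity

set_option maxHeartbeats 1000000 in
lemma dist2_le (u v : ℕ → Bool) (N : ℕ) (h : ∀ i < N, u i = v i) :
    dist2 u v ≤ (1/2) ^ N := by
  have hs := summable_dist2 u v
  rw [dist2, ← Summable.sum_add_tsum_nat_add N hs]
  have h0 : ∑ i ∈ Finset.range N, (if u i = v i then (0:ℝ) else (1/2)^(i+1)) = 0 := by
    apply Finset.sum_eq_zero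
    intro i hi
    simp [h i (Finset.mem_range.1 hi)]
  rw [h0, zero_add]
  have hle : ∀ i : ℕ, (if u (i + N) = v (i + N) then (0:ℝ) else (1/2)^(i + N + 1))
      ≤ (1/2)^(i + N + 1) := by
    intro i; by_cases hc : u (i + N) = v (i + N) <;> simp [hc] <;> positivity
  have hsum2 : Summable (fun i : ℕ => ((1:ℝ)/2)^(i + N + 1)) :=
    ((summable_geometric_of_lt_one (by norm_num : (0:ℝ) ≤ 1/2) (by norm_num)).mul_right
      ((1/2)^(N+1))).congr (fun i => by rw [← pow_add, ← add_assoc])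
  calc ∑' i : ℕ, (if u (i + N) = v (i + N) then (0:ℝ) else (1/2)^(i + N + 1))
      ≤ ∑' i : ℕ, ((1:ℝ)/2)^(i + N + 1) :=
        Summable.tsum_le_tsum hle ((summable_nat_add_iff N).2 hs) hsum2
    _ = (1/2) ^ N := by
        have : ∀ i : ℕ, ((1:ℝ)/2)^(i + N + 1) = (1/2)^(N+1) * (1/2)^i := by
          intro i; rw [← pow_add]; ring_nf
        rw [tsum_congr this, tsum_mul_left,
          tsum_geometric_of_lt_one (by norm_num) (by norm_num)]
        norm_num [pow_succ]
        ring

lemma Lsum_succ (a : ℕ → ℕ) (n : ℕ) : Lsum a (n + 1) = Lsum a n + 2 ^ (a n) :=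
  Finset.sum_range_succ _ n

lemma Lsum_le (a : ℕ → ℕ) (hmono : StrictMono a) (n : ℕ) :
    Lsum a (n + 1) ≤ (n + 1) * 2 ^ (a n) := by
  calc Lsum a (n+1) = ∑ i ∈ Finset.range (n+1), 2 ^ (a i) := rfl
    _ ≤ ∑ _i ∈ Finset.range (n+1), 2 ^ (a n) := by
        apply Finset.sum_le_sum
        intro i hi
        exact Nat.pow_le_pow_right (by norm_num) (hmono.monotone (Nat.lt_succ_iff.1 (Finset.mem_range.1 hi)))
    _ = (n + 1) * 2 ^ (a n) := by rw [Finset.sum_const, Finset.card_range, smul_eq_mul]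

lemma tendsto_L_div (a : ℕ → ℕ) (hmono : StrictMono a)
    (hratio : Tendsto (fun n => (a n : ℝ) / (a (n + 1) : ℝ)) atTop (nhds 0)) (N : ℕ) :
    Tendsto (fun n => ((Lsum a n : ℝ) + N) / 2 ^ (a n)) atTop (nhds 0) := by
  have h2 : ∀ᶠ n in atTop, 2 * a n ≤ a (n + 1) := by
    filter_upwards [hratio.eventually_lt_const (by norm_num : (0:ℝ) < 1/2)] with n hn
    have hp : (0:ℝ) < (a (n+1) : ℝ) := by
      have := hmono (Nat.lt_succ_self n)
      exact_mod_cast Nat.lt_of_le_of_lt (Nat.zero_le _) this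
    have h1 := (div_lt_iff₀ hp).1 hn
    have h2' : (2 * a n : ℝ) ≤ (a (n+1) : ℝ) := by push_cast; nlinarith
    exact_mod_cast h2'
  have hbound : ∀ᶠ n in atTop,
      ((Lsum a (n + 1) : ℝ) + N) / 2 ^ (a (n + 1)) ≤ ((n:ℝ) + 1 + N) / 2 ^ n := by
    filter_upwards [h2] with n hn
    have hA1 : (2:ℝ) ^ n ≤ 2 ^ (a n) :=
      pow_le_pow_right₀ (by norm_num) (hmono.le_apply)
    have hA : (0:ℝ) < 2 ^ (a n) := by positivity
    have hden : ((2:ℝ) ^ n) * 2 ^ (a n) ≤ 2 ^ (a (n + 1)) := by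
      calc ((2:ℝ) ^ n) * 2 ^ (a n) ≤ 2 ^ (a n) * 2 ^ (a n) := by nlinarith
        _ = 2 ^ (a n + a n) := by rw [pow_add]
        _ ≤ 2 ^ (a (n + 1)) := pow_le_pow_right₀ (by norm_num) (by omega)
    have hnum : (Lsum a (n + 1) : ℝ) + N ≤ ((n:ℝ) + 1 + N) * 2 ^ (a n) := by
      have hL : (Lsum a (n+1) : ℝ) ≤ ((n:ℝ)+1) * 2 ^ (a n) := by
        exact_mod_cast Lsum_le a hmono n
      have hN : (N:ℝ) ≤ (N:ℝ) * 2 ^ (a n) :=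
        le_mul_of_one_le_right (Nat.cast_nonneg N) (one_le_pow₀ (by norm_num))
      nlinarith
    calc ((Lsum a (n + 1) : ℝ) + N) / 2 ^ (a (n + 1))
        ≤ (((n:ℝ) + 1 + N) * 2 ^ (a n)) / (2 ^ n * 2 ^ (a n)) :=
          div_le_div₀ (by positivity) hnum (by positivity) hden
      _ = ((n:ℝ) + 1 + N) / 2 ^ n := mul_div_mul_right _ _ (ne_of_gt hA)
  have hsum : Summable (fun n : ℕ => ((n:ℝ) + 1 + N) * (1/2) ^ n) := by
    have h1 := summable_pow_mul_geometric_of_norm_lt_one (R := ℝ) 1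
      (r := (1/2:ℝ)) (by rw [Real.norm_eq_abs]; rw [abs_of_pos]; norm_num; norm_num)
    have hg := summable_geometric_of_lt_one (by norm_num : (0:ℝ) ≤ 1/2) (by norm_num)
    exact (h1.add (hg.mul_left ((1:ℝ) + N))).congr (fun n => by push_cast; ring)
  have htg : Tendsto (fun n : ℕ => ((n:ℝ) + 1 + N) / 2 ^ n) atTop (nhds 0) :=
    hsum.tendsto_atTop_zero.congr (fun n => by
      rw [one_div_pow, mul_one_div])
  have hshift : Tendsto (fun n => ((Lsum a (n + 1) : ℝ) + N) / 2 ^ (a (n + 1))) atTop (nhds 0) :=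
    squeeze_zero' (Eventually.of_forall (fun n => by positivity)) hbound htg
  exact (tendsto_add_atTop_iff_nat 1).1 hshift

theorem stmt10 (a : ℕ → ℕ) (α β : ℕ → Bool) (hmono : StrictMono a) (hpos : ∀ n, 0 < a n)
    (hratio : Tendsto (fun n => (a n : ℝ) / (a (n + 1) : ℝ)) atTop (nhds 0))
    (hdiff : {j : ℕ | α j ≠ β j}.Infinite) :
    ∀ ε > 0, PhiStar (xpt a α) (xpt a β) ε = 1 := by
  intro ε hε
  obtain ⟨N', hN'⟩ := exists_pow_lt_of_lt_one hε (by norm_num : (1:ℝ)/2 < 1)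
  set N := N' + 1 with hNdef
  have hNε : ((1:ℝ)/2) ^ N < ε :=
    lt_of_le_of_lt (pow_le_pow_of_le_one (by norm_num) (by norm_num) (Nat.le_succ N')) hN'
  have hN1 : 1 ≤ N := Nat.le_add_left 1 N'
  set x := xpt a α with hx
  set y := xpt a β with hy
  rw [PhiStar]
  set u : ℕ → ℝ := fun m =>
    (((Finset.Ioo 0 m).filter (fun k => dist2 (shift^[k] x) (shift^[k] y) < ε)).card : ℝ) / m
    with hu
  have hu0 : ∀ m, 0 ≤ u m := fun m => by rw [hu]; positivity
  have hu1 : ∀ m, u m ≤ 1 := by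
    intro m
    rcases Nat.eq_zero_or_pos m with h | h
    · simp [hu, h]
    · rw [hu]
      have h1 : (((Finset.Ioo 0 m).filter
          (fun k => dist2 (shift^[k] x) (shift^[k] y) < ε)).card) ≤ m := by
        have h2 := Finset.card_filter_le (Finset.Ioo 0 m)
          (fun k => dist2 (shift^[k] x) (shift^[k] y) < ε)
        have h3 := Nat.card_Ioo 0 m
        omega
      exact div_le_one_of_le₀ (by exact_mod_cast h1) (Nat.cast_nonneg m)
  have key : ∀ c : ℝ, c < 1 → c ≤ limsup u atTop := by
    intro c hc
    apply le_limsup_of_frequently_le ?_ (isBoundedUnder_of ⟨1, hu1⟩)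
    rcases le_or_gt c 0 with hc0 | hc0
    · exact (Eventually.of_forall (fun m => hc0.trans (hu0 m))).frequently
    have hT := tendsto_L_div a hmono hratio N
    have hE : ∀ᶠ n in atTop, (Lsum a n : ℝ) + N ≤ (1 - c) * 2 ^ (a n) := by
      filter_upwards [hT.eventually_lt_const (by linarith : (0:ℝ) < 1 - c)] with n hn
      have hA : (0:ℝ) < 2 ^ (a n) := by positivity
      exact le_of_lt ((div_lt_iff₀ hA).1 hn)
    have hNle : ∀ᶠ n in atTop, N ≤ 2 ^ (a n) := by
      filter_upwards [eventually_ge_atTop N] with n hn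
      have h1 : n ≤ a n := hmono.le_apply
      have h2 : a n < 2 ^ (a n) := Nat.lt_two_pow_self
      omega
    obtain ⟨n₀, hn₀⟩ := eventually_atTop.1 (hE.and hNle)
    have hLs : StrictMono (Lsum a) := strictMono_nat_of_lt_succ (fun n => by
      rw [Lsum_succ]
      have : 0 < 2 ^ (a n) := Nat.pow_pos (by norm_num)
      omega)
    have htendL : Tendsto (fun t : ℕ => Lsum a (2 * t + 2)) atTop atTop :=
      tendsto_atTop_mono (fun t => le_trans (show t ≤ 2 * t + 2 by omega)
        (hLs.le_apply (x := 2 * t + 2))) tendsto_id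
    have hev : ∀ᶠ t in atTop, c ≤ u (Lsum a (2 * t + 2)) := by
      rw [eventually_atTop]
      refine ⟨n₀, fun t ht => ?_⟩
      set n := 2 * t + 1 with hn
      obtain ⟨hEn, hNn⟩ := hn₀ n (by omega)
      have hm : Lsum a (n + 1) = Lsum a n + 2 ^ (a n) := Lsum_succ a n
      have hLpos : 0 < Lsum a n := by
        have h0 : 2 ^ (a 0) ≤ Lsum a n :=
          Finset.single_le_sum (f := fun i => 2 ^ (a i)) (fun i _ => Nat.zero_le _)
            (Finset.mem_range.2 (by omega))
        have : 0 < 2 ^ (a 0) := Nat.pow_pos (by norm_num)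
        omega
      set S : Finset ℕ := Finset.Icc (Lsum a n) (Lsum a n + (2 ^ (a n) - N)) with hS
      have hsub : S ⊆ (Finset.Ioo 0 (Lsum a (n + 1))).filter
          (fun k => dist2 (shift^[k] x) (shift^[k] y) < ε) := by
        intro k hk
        rw [hS, Finset.mem_Icc] at hk
        rw [Finset.mem_filter, Finset.mem_Ioo]
        refine ⟨⟨by omega, by omega⟩, ?_⟩
        have hagree : ∀ i, i < N → shift^[k] x i = shift^[k] y i := by
          intro i hi
          rw [hx, hy, shift_iter, shift_iter]
          exact xpt_eq_on a α β n (i + k) (by omega) (by omega) (by omega)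
        calc dist2 (shift^[k] x) (shift^[k] y) ≤ (1/2) ^ N := dist2_le _ _ N hagree
          _ < ε := hNε
      have hScard : S.card = 2 ^ (a n) - N + 1 := by
        rw [hS, Nat.card_Icc]; omega
      have hcard : 2 ^ (a n) - N + 1 ≤ ((Finset.Ioo 0 (Lsum a (n + 1))).filter
          (fun k => dist2 (shift^[k] x) (shift^[k] y) < ε)).card := by
        rw [← hScard]; exact Finset.card_le_card hsub
      -- now the real estimate
      have hm0 : (0:ℝ) < (Lsum a (n + 1) : ℝ) := by
        have : 0 < Lsum a (n + 1) := by omega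
        exact_mod_cast this
      rw [hu]
      show c ≤ (((Finset.Ioo 0 (Lsum a (n + 1))).filter
          (fun k => dist2 (shift^[k] x) (shift^[k] y) < ε)).card : ℝ) / (Lsum a (n + 1))
      rw [le_div_iff₀ hm0]
      have hcast1 : ((Lsum a (n + 1) : ℕ) : ℝ) = (Lsum a n : ℝ) + 2 ^ (a n) := by
        rw [hm]; push_cast; ring
      have hcast2 : ((2 ^ (a n) - N + 1 : ℕ) : ℝ) = (2 ^ (a n) : ℝ) - N + 1 := by
        have := hNn
        push_cast [Nat.cast_sub this]
        ring
      have hcardR : ((2:ℝ) ^ (a n)) - N + 1 ≤ (((Finset.Ioo 0 (Lsum a (n + 1))).filter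
          (fun k => dist2 (shift^[k] x) (shift^[k] y) < ε)).card : ℝ) := by
        rw [← hcast2]
        exact_mod_cast hcard
      have hL0 : (0:ℝ) ≤ (Lsum a n : ℝ) := Nat.cast_nonneg _
      nlinarith [hcardR, hEn, hL0, hc.le, hcast1]
    exact htendL.frequently hev.frequently
  have hge : 1 ≤ limsup u atTop := by
    by_contra h
    push_neg at h
    have := key ((limsup u atTop + 1) / 2) (by linarith)
    linarith
  have hle : limsup u atTop ≤ 1 :=
    limsup_le_of_le (isCoboundedUnder_le_of_le atTop hu0) (Eventually.of_forall hu1)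
  linarith
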